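/- arXiv:2405.01761 — 7 statements merged into one kernel-verified Lean document; each statement's English description precedes it below -/
import Mathlib

section
/- Let K be a symmetric positive definite t×t real matrix, D a diagonal N×N matrix with strictly positive diagonal entries, and Φ a t×N real matrix of full row rank t with N ≥ t. Define Ω = D + Φᵀ K Φ. Then (Φ Ω⁻¹ Φᵀ)⁻¹ = K + (Φ D⁻¹ Φᵀ)⁻¹. -/
open Matrix

private lemma part2' {m : Type*} [Fintype m] [DecidableEq m]
    (A Ai K Ki Ci : Matrix m m ℝ)
    (hA : A * Ai = 1) (hK : Ki * K = 1) (hC : Ci * (Ki + A) = 1) :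
    (A - A * Ci * A) * (K + Ai) = 1 := by
  have h0 : A * K + 1 = (Ki + A) * K := by rw [add_mul, hK, add_comm]
  have h1 : A * Ci * (A * K + 1) = A * K := by
    rw [h0, ← mul_assoc, mul_assoc A Ci, hC, mul_one]
  have expand : (A - A * Ci * A) * (K + Ai)
      = A * K + A * Ai - A * Ci * (A * K + A * Ai) := by
    noncomm_ring
  rw [expand, hA, h1]
  abel

private lemma part1' {n m : Type*} [Fintype n] [Fintype m] [DecidableEq n] [DecidableEq m]
    (D Di : Matrix n n ℝ) (K Ki Ci : Matrix m m ℝ) (P : Matrix m n ℝ)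
    (hD : D * Di = 1) (hK : K * Ki = 1)
    (hC : (Ki + P * Di * Pᵀ) * Ci = 1) :
    (D + Pᵀ * K * P) * (Di - Di * Pᵀ * Ci * (P * Di)) = 1 := by
  have h21 : (K * Ki + K * (P * Di * Pᵀ)) * Ci = K := by
    rw [← mul_add, mul_assoc, hC, mul_one]
  have h2 : Ci + K * (P * Di * Pᵀ) * Ci = K := by
    calc Ci + K * (P * Di * Pᵀ) * Ci
        = (K * Ki) * Ci + K * (P * Di * Pᵀ) * Ci := by rw [hK, one_mul]
      _ = (K * Ki + K * (P * Di * Pᵀ)) * Ci := (add_mul _ _ _).symm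
      _ = K := h21
  have h3 := congrArg (fun M => Pᵀ * (M * (P * Di))) h2
  simp only [Matrix.add_mul, Matrix.mul_add, Matrix.mul_sub, Matrix.sub_mul,
    Matrix.mul_assoc] at h3 ⊢
  have hDW : D * (Di * (Pᵀ * (Ci * (P * Di)))) = Pᵀ * (Ci * (P * Di)) := by
    rw [← Matrix.mul_assoc, hD, one_mul]
  rw [hD, hDW, ← h3]
  abel

theorem inv_PhiOmegaInvPhiT {t N : ℕ} (htN : t ≤ N)
    (K : Matrix (Fin t) (Fin t) ℝ) (hK : K.PosDef)
    (d : Fin N → ℝ) (hd : ∀ i, 0 < d i)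
    (D : Matrix (Fin N) (Fin N) ℝ) (hD : D = Matrix.diagonal d)
    (Φ : Matrix (Fin t) (Fin N) ℝ) (hrank : Φ.rank = t)
    (Ω : Matrix (Fin N) (Fin N) ℝ) (hΩ : Ω = D + Φᵀ * K * Φ) :
    (Φ * Ω⁻¹ * Φᵀ)⁻¹ = K + (Φ * D⁻¹ * Φᵀ)⁻¹ := by
  subst hD hΩ
  set D := Matrix.diagonal d with hDdef
  have hDpd : D.PosDef := Matrix.PosDef.diagonal hd
  have hD1 : D * D⁻¹ = 1 := Matrix.mul_nonsing_inv _ hDpd.det_pos.ne'.isUnit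
  have hDiPD : D⁻¹.PosDef := hDpd.inv
  -- full row rank gives injectivity of x ↦ Φᵀ *ᵥ x
  have hGr : (Φ * Φᵀ).rank = t := by rw [Matrix.rank_self_mul_transpose, hrank]
  have hGu : IsUnit (Φ * Φᵀ) := by
    rw [← Matrix.mulVec_surjective_iff_isUnit]
    have hrange : LinearMap.range (Φ * Φᵀ).mulVecLin = ⊤ := by
      apply Submodule.eq_top_of_finrank_eq
      rw [Module.finrank_fintype_fun_eq_card, Fintype.card_fin]
      exact hGr
    intro y
    obtain ⟨x, hx⟩ := LinearMap.range_eq_top.mp hrange y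
    exact ⟨x, hx⟩
  have hinj : ∀ x : Fin t → ℝ, Φᵀ *ᵥ x = 0 → x = 0 := by
    intro x hx
    have h0 : (Φ * Φᵀ) *ᵥ x = 0 := by
      rw [← Matrix.mulVec_mulVec, hx, Matrix.mulVec_zero]
    have := Matrix.mulVec_injective_iff_isUnit.mpr hGu
    exact this (by simpa using h0)
  -- A := Φ * D⁻¹ * Φᵀ is positive definite
  have hA : (Φ * D⁻¹ * Φᵀ).PosDef := by
    refine Matrix.PosDef.of_dotProduct_mulVec_pos ?_ fun x hx => ?_
    · simpa [Matrix.conjTranspose_eq_transpose_of_trivial] using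
        Matrix.isHermitian_mul_mul_conjTranspose Φ hDiPD.isHermitian
    · have hy : Φᵀ *ᵥ x ≠ 0 := fun h => hx (hinj x h)
      have hpos := hDiPD.dotProduct_mulVec_pos (x := Φᵀ *ᵥ x) hy
      have hcalc : star x ⬝ᵥ ((Φ * D⁻¹ * Φᵀ) *ᵥ x)
          = star (Φᵀ *ᵥ x) ⬝ᵥ (D⁻¹ *ᵥ (Φᵀ *ᵥ x)) := by
        rw [← Matrix.mulVec_mulVec, ← Matrix.mulVec_mulVec,
          Matrix.dotProduct_mulVec (star x) Φ, star_trivial, star_trivial,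
          ← Matrix.mulVec_transpose]
      rw [hcalc]
      exact hpos
  have hAu : IsUnit (Φ * D⁻¹ * Φᵀ) := hA.isUnit
  have hA1 : (Φ * D⁻¹ * Φᵀ) * (Φ * D⁻¹ * Φᵀ)⁻¹ = 1 :=
    Matrix.mul_nonsing_inv _ hA.det_pos.ne'.isUnit
  have hK1 : K * K⁻¹ = 1 := Matrix.mul_nonsing_inv _ hK.det_pos.ne'.isUnit
  have hK2 : K⁻¹ * K = 1 := Matrix.nonsing_inv_mul _ hK.det_pos.ne'.isUnit
  have hCpd : (K⁻¹ + Φ * D⁻¹ * Φᵀ).PosDef := hK.inv.add hA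
  have hC1 : (K⁻¹ + Φ * D⁻¹ * Φᵀ) * (K⁻¹ + Φ * D⁻¹ * Φᵀ)⁻¹ = 1 :=
    Matrix.mul_nonsing_inv _ hCpd.det_pos.ne'.isUnit
  have hC2 : (K⁻¹ + Φ * D⁻¹ * Φᵀ)⁻¹ * (K⁻¹ + Φ * D⁻¹ * Φᵀ) = 1 :=
    Matrix.nonsing_inv_mul _ hCpd.det_pos.ne'.isUnit
  set Ci := (K⁻¹ + Φ * D⁻¹ * Φᵀ)⁻¹ with hCi
  have key1 : (D + Φᵀ * K * Φ) * (D⁻¹ - D⁻¹ * Φᵀ * Ci * (Φ * D⁻¹)) = 1 :=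
    part1' D D⁻¹ K K⁻¹ Ci Φ hD1 hK1 hC1
  have hΩinv : (D + Φᵀ * K * Φ)⁻¹ = D⁻¹ - D⁻¹ * Φᵀ * Ci * (Φ * D⁻¹) :=
    Matrix.inv_eq_right_inv key1
  have hS : Φ * (D + Φᵀ * K * Φ)⁻¹ * Φᵀ
      = (Φ * D⁻¹ * Φᵀ) - (Φ * D⁻¹ * Φᵀ) * Ci * (Φ * D⁻¹ * Φᵀ) := by
    rw [hΩinv]
    simp only [Matrix.mul_sub, Matrix.sub_mul, Matrix.mul_assoc]
  have key2 : ((Φ * D⁻¹ * Φᵀ) - (Φ * D⁻¹ * Φᵀ) * Ci * (Φ * D⁻¹ * Φᵀ))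
      * (K + (Φ * D⁻¹ * Φᵀ)⁻¹) = 1 :=
    part2' (Φ * D⁻¹ * Φᵀ) (Φ * D⁻¹ * Φᵀ)⁻¹ K K⁻¹ Ci hA1 hK2 hC2
  rw [hS]
  exact Matrix.inv_eq_right_inv key2
end

section
/- Let K be a symmetric positive definite t×t real matrix, D a diagonal N×N matrix with strictly positive diagonal entries, and Φ a t×N real matrix of full row rank t with N ≥ t. Define Ω = D + Φᵀ K Φ. Then Ω⁻¹ Φᵀ (Φ Ω⁻¹ Φᵀ)⁻¹ = D⁻¹ Φᵀ (Φ D⁻¹ Φᵀ)⁻¹. In particular, the generalized least-squares solution Y D⁻¹ Φᵀ (Φ D⁻¹ Φᵀ)⁻¹ equals Y Ω⁻¹ Φᵀ (Φ Ω⁻¹ Φᵀ)⁻¹ for any p×N matrix Y. -/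
open Matrix

private lemma transpose_mulVec_ne_zero {t N : ℕ} (Φ : Matrix (Fin t) (Fin N) ℝ)
    (hrank : Φ.rank = t) {x : Fin t → ℝ} (hx : x ≠ 0) : Φᵀ *ᵥ x ≠ 0 := by
  have hrt : Φᵀ.rank = t := by rw [Matrix.rank_transpose, hrank]
  unfold Matrix.rank at hrt
  have hker : LinearMap.ker Φᵀ.mulVecLin = ⊥ := by
    have h1 := LinearMap.finrank_range_add_finrank_ker Φᵀ.mulVecLin
    rw [hrt, Module.finrank_fin_fun] at h1
    have h0 : Module.finrank ℝ (LinearMap.ker Φᵀ.mulVecLin) = 0 := by omega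
    exact Submodule.finrank_eq_zero.mp h0
  intro h
  have hx0 : x ∈ LinearMap.ker Φᵀ.mulVecLin := by
    rw [LinearMap.mem_ker, Matrix.mulVecLin_apply]
    exact h
  rw [hker, Submodule.mem_bot] at hx0
  exact hx hx0

theorem OmegaInv_ls_eq_DInv_ls {t N : ℕ} (htN : t ≤ N)
    (K : Matrix (Fin t) (Fin t) ℝ) (hK : K.PosDef)
    (d : Fin N → ℝ) (hd : ∀ i, 0 < d i)
    (D : Matrix (Fin N) (Fin N) ℝ) (hD : D = Matrix.diagonal d)
    (Φ : Matrix (Fin t) (Fin N) ℝ) (hrank : Φ.rank = t)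
    (Ω : Matrix (Fin N) (Fin N) ℝ) (hΩ : Ω = D + Φᵀ * K * Φ) :
    Ω⁻¹ * Φᵀ * (Φ * Ω⁻¹ * Φᵀ)⁻¹ = D⁻¹ * Φᵀ * (Φ * D⁻¹ * Φᵀ)⁻¹ ∧
    ∀ (p : ℕ) (Y : Matrix (Fin p) (Fin N) ℝ),
      Y * (D⁻¹ * Φᵀ * (Φ * D⁻¹ * Φᵀ)⁻¹) = Y * (Ω⁻¹ * Φᵀ * (Φ * Ω⁻¹ * Φᵀ)⁻¹) := by
  have hct : ∀ {a b : ℕ} (B : Matrix (Fin a) (Fin b) ℝ), Bᴴ = Bᵀ := by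
    intro a b B; ext i j; simp [Matrix.conjTranspose_apply]
  have hDpd : D.PosDef := hD ▸ Matrix.PosDef.diagonal hd
  have hDinv : D⁻¹.PosDef := hDpd.inv
  -- Ω is positive definite
  have hΩpd : Ω.PosDef := by
    rw [hΩ]
    refine hDpd.add_posSemidef ?_
    have h := hK.posSemidef.conjTranspose_mul_mul_same Φ
    rwa [hct Φ] at h
  -- A := Φ * D⁻¹ * Φᵀ is positive definite
  set A := Φ * D⁻¹ * Φᵀ with hA_def
  have hApsd : A.PosSemidef := by
    have h := hDinv.posSemidef.mul_mul_conjTranspose_same Φ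
    rwa [hct Φ] at h
  have hApd : A.PosDef := by
    refine Matrix.PosDef.of_dotProduct_mulVec_pos hApsd.isHermitian (fun x hx => ?_)
    have hy : Φᵀ *ᵥ x ≠ 0 := transpose_mulVec_ne_zero Φ hrank hx
    have hpos := hDinv.dotProduct_mulVec_pos hy
    have hcalc : star x ⬝ᵥ (A *ᵥ x) = star (Φᵀ *ᵥ x) ⬝ᵥ (D⁻¹ *ᵥ (Φᵀ *ᵥ x)) := by
      rw [hA_def, ← Matrix.mulVec_mulVec, ← Matrix.mulVec_mulVec,
        Matrix.dotProduct_mulVec, ← Matrix.mulVec_transpose]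
      simp [star]
    rw [hcalc]
    exact hpos
  -- invertibility facts
  have hKunit : IsUnit K.det := hK.isUnit.map (Matrix.detMonoidHom)
  have hDunit : IsUnit D.det := hDpd.isUnit.map (Matrix.detMonoidHom)
  have hΩunit : IsUnit Ω.det := hΩpd.isUnit.map (Matrix.detMonoidHom)
  have hAunit : IsUnit A.det := hApd.isUnit.map (Matrix.detMonoidHom)
  -- M := 1 + K * A is invertible
  set M := (1 : Matrix (Fin t) (Fin t) ℝ) + K * A with hM_def
  have hMeq : M = K * (K⁻¹ + A) := by
    rw [Matrix.mul_add, Matrix.mul_nonsing_inv K hKunit, hM_def]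
  have hKiA : (K⁻¹ + A).PosDef := hK.inv.add hApd
  have hKiAunit : IsUnit (K⁻¹ + A).det := hKiA.isUnit.map (Matrix.detMonoidHom)
  have hMunit : IsUnit M.det := by
    rw [hMeq, Matrix.det_mul]
    exact hKunit.mul hKiAunit
  -- key identity: Ω * (D⁻¹ * Φᵀ) = Φᵀ * M
  have key : Ω * (D⁻¹ * Φᵀ) = Φᵀ * M := by
    rw [hΩ, hM_def, Matrix.add_mul, Matrix.mul_add, Matrix.mul_one]
    rw [← Matrix.mul_assoc D, Matrix.mul_nonsing_inv D hDunit, Matrix.one_mul, hA_def]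
    simp only [Matrix.mul_assoc]
  -- hence Ω⁻¹ * Φᵀ = D⁻¹ * Φᵀ * M⁻¹
  have step : Ω⁻¹ * Φᵀ = D⁻¹ * Φᵀ * M⁻¹ := by
    have h1 : Ω⁻¹ * (Ω * (D⁻¹ * Φᵀ)) = Ω⁻¹ * (Φᵀ * M) := by rw [key]
    rw [← Matrix.mul_assoc, Matrix.nonsing_inv_mul Ω hΩunit, Matrix.one_mul] at h1
    have h2 : D⁻¹ * Φᵀ * M⁻¹ = Ω⁻¹ * (Φᵀ * M) * M⁻¹ := by rw [← h1]
    rw [h2, Matrix.mul_assoc (Ω⁻¹), Matrix.mul_assoc (Φᵀ),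
      Matrix.mul_nonsing_inv M hMunit, Matrix.mul_one]
  have hΦΩ : Φ * Ω⁻¹ * Φᵀ = A * M⁻¹ := by
    rw [Matrix.mul_assoc, step, hA_def]
    simp only [Matrix.mul_assoc]
  have main : Ω⁻¹ * Φᵀ * (Φ * Ω⁻¹ * Φᵀ)⁻¹ = D⁻¹ * Φᵀ * A⁻¹ := by
    rw [hΦΩ, Matrix.mul_inv_rev, Matrix.nonsing_inv_nonsing_inv M hMunit, step,
      Matrix.mul_assoc (D⁻¹ * Φᵀ), ← Matrix.mul_assoc (M⁻¹),
      Matrix.nonsing_inv_mul M hMunit, Matrix.one_mul, Matrix.mul_assoc]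
  exact ⟨main, fun p Y => by rw [main]⟩
end

section
/- For a fixed n×n real symmetric positive definite matrix B, the function f(A) = log det A + trace(A⁻¹ B), defined on the cone of n×n symmetric positive definite matrices, attains its unique global minimum at A = B, with minimum value log det B + n. -/
open Matrix
open scoped MatrixOrder

lemma my_trace_eq_sum_eigenvalues {n : ℕ} {C : Matrix (Fin n) (Fin n) ℝ}
    (hC : C.IsHermitian) : C.trace = ∑ i, hC.eigenvalues i := by
  conv_lhs => rw [hC.spectral_theorem]
  rw [Unitary.conjStarAlgAut_apply, Matrix.trace_mul_cycle,
    (Matrix.mem_unitaryGroup_iff').mp (Matrix.IsHermitian.eigenvectorUnitary hC).2, one_mul,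
    Matrix.trace_diagonal]
  simp

lemma my_det_eq_prod_eigenvalues {n : ℕ} {C : Matrix (Fin n) (Fin n) ℝ}
    (hC : C.IsHermitian) : C.det = ∏ i, hC.eigenvalues i := by
  simpa using hC.det_eq_prod_eigenvalues

lemma my_key {n : ℕ} {C : Matrix (Fin n) (Fin n) ℝ} (hC : C.PosDef) (hne : C ≠ 1) :
    (n : ℝ) < C.trace - Real.log C.det := by
  have hμ : ∀ i, 0 < hC.1.eigenvalues i := hC.eigenvalues_pos
  have hdet : C.det = ∏ i, hC.1.eigenvalues i := my_det_eq_prod_eigenvalues hC.1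
  have hlog : Real.log C.det = ∑ i, Real.log (hC.1.eigenvalues i) := by
    rw [hdet, Real.log_prod]
    exact fun i _ => (hμ i).ne'
  have htr : C.trace = ∑ i, hC.1.eigenvalues i := my_trace_eq_sum_eigenvalues hC.1
  have hex : ∃ i, hC.1.eigenvalues i ≠ 1 := by
    by_contra h
    push_neg at h
    apply hne
    have hfun : (RCLike.ofReal ∘ hC.1.eigenvalues : Fin n → ℝ) = fun _ => 1 := by
      funext i; simp [h i]
    have : Matrix.diagonal (RCLike.ofReal ∘ hC.1.eigenvalues) = (1 : Matrix (Fin n) (Fin n) ℝ) := by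
      rw [hfun, Matrix.diagonal_one]
    conv_lhs => rw [hC.1.spectral_theorem, Unitary.conjStarAlgAut_apply, this, mul_one,
      (Matrix.mem_unitaryGroup_iff).mp (Matrix.IsHermitian.eigenvectorUnitary hC.1).2]
  obtain ⟨j, hj⟩ := hex
  have : ∑ _i : Fin n, (1 : ℝ) < ∑ i, (hC.1.eigenvalues i - Real.log (hC.1.eigenvalues i)) := by
    apply Finset.sum_lt_sum
    · intro i _
      have := Real.log_le_sub_one_of_pos (hμ i)
      linarith
    · refine ⟨j, Finset.mem_univ j, ?_⟩
      have := Real.log_lt_sub_one_of_pos (hμ j) hj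
      linarith
  simpa [htr, hlog, Finset.sum_sub_distrib] using this

theorem logdet_traceinv_unique_min {n : ℕ}
    (B : Matrix (Fin n) (Fin n) ℝ) (hB : B.PosDef) :
    Real.log B.det + (B⁻¹ * B).trace = Real.log B.det + (n : ℝ) ∧
    ∀ A : Matrix (Fin n) (Fin n) ℝ, A.PosDef → A ≠ B →
      Real.log B.det + (n : ℝ) < Real.log A.det + (A⁻¹ * B).trace := by
  have hBdet : IsUnit B.det := isUnit_iff_ne_zero.mpr hB.det_pos.ne'
  constructor
  · rw [Matrix.nonsing_inv_mul B hBdet, Matrix.trace_one]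
    simp
  · intro A hA hne
    have hAdet : A.det ≠ 0 := hA.det_pos.ne'
    have hAinv : A⁻¹.PosDef := hA.inv
    set R := CFC.sqrt A⁻¹ with hRdef
    have hRR : R * R = A⁻¹ := CFC.sqrt_mul_sqrt_self A⁻¹ hAinv.posSemidef.nonneg
    have hRps : R.PosSemidef := (CFC.sqrt_nonneg A⁻¹).posSemidef
    have hRherm : R.IsHermitian := hRps.1
    have hRdet : R.det ≠ 0 := by
      intro h
      have : A⁻¹.det = 0 := by rw [← hRR, Matrix.det_mul, h, mul_zero]
      rw [Matrix.det_nonsing_inv] at this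
      simp [Ring.inverse_eq_inv] at this
      exact hAdet this
    set C := R * B * R with hCdef
    have hC : C.PosDef := by
      refine Matrix.PosDef.of_dotProduct_mulVec_pos ?_ fun x hx => ?_
      · show (R * B * R).IsHermitian
        unfold Matrix.IsHermitian
        rw [Matrix.conjTranspose_mul, Matrix.conjTranspose_mul, hRherm.eq, hB.1.eq, mul_assoc]
      · have hRx : R *ᵥ x ≠ 0 :=
          (Matrix.mulVec_injective_iff_isUnit.mpr ((Matrix.isUnit_iff_isUnit_det R).mpr (isUnit_iff_ne_zero.mpr hRdet))).ne_iff'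
            (Matrix.mulVec_zero R) |>.2 hx
        have := hB.dotProduct_mulVec_pos hRx
        have hRH : Rᴴ = R := hRherm.eq
        calc (0:ℝ) < dotProduct (star (R *ᵥ x)) (B *ᵥ (R *ᵥ x)) := this
          _ = dotProduct (star x) ((Rᴴ * B * R) *ᵥ x) := by
              simp only [star_mulVec, Matrix.dotProduct_mulVec, Matrix.vecMul_vecMul]
          _ = dotProduct (star x) (C *ᵥ x) := by rw [hRH]
    have hCne : C ≠ 1 := by
      intro h
      have hRu : IsUnit R.det := isUnit_iff_ne_zero.mpr hRdet
      have hC1 : R * B * R = 1 := by rw [← hCdef]; exact h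
      have e1 : R⁻¹ * (R * B * R) * R⁻¹ = B := by
        have : R⁻¹ * (R * B * R) * R⁻¹ = (R⁻¹ * R) * B * (R * R⁻¹) := by
          simp only [← mul_assoc]
        rw [this, Matrix.nonsing_inv_mul R hRu, Matrix.mul_nonsing_inv R hRu, one_mul, mul_one]
      have e2 : B = A := by
        rw [← e1, hC1, mul_one, ← Matrix.mul_inv_rev, hRR,
          Matrix.nonsing_inv_nonsing_inv A (isUnit_iff_ne_zero.mpr hAdet)]
      exact hne e2.symm
    have htrace : (A⁻¹ * B).trace = C.trace := by
      rw [← hRR, hCdef]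
      exact (Matrix.trace_mul_cycle R R B).trans (Matrix.trace_mul_cycle B R R)
    have hdetC : C.det = A⁻¹.det * B.det := by
      rw [hCdef, Matrix.det_mul, Matrix.det_mul, ← hRR, Matrix.det_mul]
      ring
    have hkey := my_key hC hCne
    have hlogC : Real.log C.det = Real.log B.det - Real.log A.det := by
      rw [hdetC, Real.log_mul (by rw [Matrix.det_nonsing_inv]; simp [Ring.inverse_eq_inv, hAdet]) hB.det_pos.ne',
        Matrix.det_nonsing_inv, Ring.inverse_eq_inv, Real.log_inv]
      ring
    rw [htrace]
    rw [hlogC] at hkey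
    linarith
end

section
/- Let B be an n×n real symmetric positive semidefinite matrix that is singular (not invertible). Then the function f(A) = log det A + trace(A⁻¹ B) on the cone of n×n symmetric positive definite matrices is unbounded below: for every real M there exists a positive definite A with f(A) < M. -/
open Matrix

private lemma posDef_conj_unitary {n : ℕ} {C D : Matrix (Fin n) (Fin n) ℝ}
    (hC : C * Cᴴ = 1) (hD : D.PosDef) : (C * D * Cᴴ).PosDef := by
  rw [posDef_iff_dotProduct_mulVec]
  constructor
  · simpa using isHermitian_conjTranspose_mul_mul Cᴴ hD.1
  · intro x hx
    have hx' : Cᴴ *ᵥ x ≠ 0 := by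
      intro h
      apply hx
      have : C *ᵥ (Cᴴ *ᵥ x) = C *ᵥ 0 := by rw [h]
      rwa [mulVec_mulVec, hC, one_mulVec, mulVec_zero] at this
    have := hD.dotProduct_mulVec_pos hx'
    simpa only [star_mulVec, dotProduct_mulVec, vecMul_vecMul,
      conjTranspose_conjTranspose] using this

theorem logdet_traceinv_unbdd_below_of_singular {n : ℕ}
    (B : Matrix (Fin n) (Fin n) ℝ) (hB : B.PosSemidef)
    (hsing : ¬ IsUnit B.det) :
    ∀ M : ℝ, ∃ A : Matrix (Fin n) (Fin n) ℝ,
      A.PosDef ∧ Real.log A.det + (A⁻¹ * B).trace < M := by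
  intro M
  have hH : B.IsHermitian := hB.isHermitian
  set C : Matrix (Fin n) (Fin n) ℝ := (hH.eigenvectorUnitary : Matrix (Fin n) (Fin n) ℝ) with hCdef
  have hC1 : C * Cᴴ = 1 := by
    simpa [star_eq_conjTranspose] using
      Matrix.mem_unitaryGroup_iff.mp hH.eigenvectorUnitary.2
  have hC2 : Cᴴ * C = 1 := by
    simpa [star_eq_conjTranspose] using
      Matrix.mem_unitaryGroup_iff'.mp hH.eigenvectorUnitary.2
  set lam : Fin n → ℝ := hH.eigenvalues with hlam
  have hlam_nonneg : ∀ i, 0 ≤ lam i := hB.eigenvalues_nonneg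
  have hBspec : B = C * diagonal lam * Cᴴ := by
    simpa [star_eq_conjTranspose, Function.comp] using hH.spectral_theorem
  -- there is a zero eigenvalue
  have hdet0 : B.det = 0 := by simpa [isUnit_iff_ne_zero, not_not] using hsing
  have hprod : ∏ i, lam i = 0 := by
    have := hH.det_eq_prod_eigenvalues
    simpa [hdet0] using this.symm
  obtain ⟨i0, -, hi0⟩ := Finset.prod_eq_zero_iff.mp hprod
  classical
  -- constants
  set Z : Finset (Fin n) := Finset.univ.filter (fun i => lam i = 0) with hZ
  set k : ℕ := Z.card with hk
  have hk1 : 1 ≤ k := Finset.card_pos.mpr ⟨i0, by simp [hZ, hi0]⟩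
  set c : ℝ := ∑ i ∈ Finset.univ.filter (fun i => ¬ lam i = 0), (Real.log (lam i) + 1) with hc
  set t : ℝ := min (-1) (M - c - 1) with ht
  have ht0 : t ≤ -1 := min_le_left _ _
  have htM : t ≤ M - c - 1 := min_le_right _ _
  set a : Fin n → ℝ := fun i => if lam i = 0 then Real.exp t else lam i with ha
  have hapos : ∀ i, 0 < a i := by
    intro i
    by_cases h : lam i = 0
    · simp [ha, h, Real.exp_pos]
    · simpa [ha, h] using lt_of_le_of_ne (hlam_nonneg i) (Ne.symm h)
  refine ⟨C * diagonal a * Cᴴ, posDef_conj_unitary hC1 (Matrix.PosDef.diagonal hapos), ?_⟩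
  -- determinant
  have hdetA : (C * diagonal a * Cᴴ).det = ∏ i, a i := by
    rw [det_mul_right_comm, hC1, Matrix.one_mul, det_diagonal]
  -- inverse
  have hinv : (C * diagonal a * Cᴴ)⁻¹ = C * diagonal (fun i => (a i)⁻¹) * Cᴴ := by
    apply inv_eq_right_inv
    calc C * diagonal a * Cᴴ * (C * diagonal (fun i => (a i)⁻¹) * Cᴴ)
        = C * diagonal a * (Cᴴ * C) * diagonal (fun i => (a i)⁻¹) * Cᴴ := by
          simp only [Matrix.mul_assoc]
      _ = C * (diagonal a * diagonal (fun i => (a i)⁻¹)) * Cᴴ := by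
          rw [hC2]; simp only [Matrix.mul_assoc, Matrix.mul_one]
      _ = 1 := by
          rw [diagonal_mul_diagonal]
          have : (fun i => a i * (a i)⁻¹) = fun _ => (1:ℝ) := by
            funext i; exact mul_inv_cancel₀ (hapos i).ne'
          rw [this, diagonal_one, Matrix.mul_one, hC1]
  -- trace
  have htr : ((C * diagonal a * Cᴴ)⁻¹ * B).trace = ∑ i, (a i)⁻¹ * lam i := by
    rw [hinv, hBspec]
    have : C * diagonal (fun i => (a i)⁻¹) * Cᴴ * (C * diagonal lam * Cᴴ)
        = C * (diagonal (fun i => (a i)⁻¹) * diagonal lam) * Cᴴ := by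
      calc C * diagonal (fun i => (a i)⁻¹) * Cᴴ * (C * diagonal lam * Cᴴ)
          = C * diagonal (fun i => (a i)⁻¹) * (Cᴴ * C) * diagonal lam * Cᴴ := by
            simp only [Matrix.mul_assoc]
        _ = _ := by rw [hC2]; simp only [Matrix.mul_assoc, Matrix.mul_one]
    rw [this, diagonal_mul_diagonal, Matrix.trace_mul_comm, ← Matrix.mul_assoc, hC2,
      Matrix.one_mul, trace_diagonal]
  rw [hdetA, htr]
  have hlog : Real.log (∏ i, a i) = ∑ i, Real.log (a i) := by
    rw [Real.log_prod (fun i _ => (hapos i).ne')]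
  rw [hlog, ← Finset.sum_add_distrib]
  have hterm : ∀ i, Real.log (a i) + (a i)⁻¹ * lam i
      = if lam i = 0 then t else Real.log (lam i) + 1 := by
    intro i
    by_cases h : lam i = 0
    · simp [ha, h, Real.log_exp]
    · have hpos : 0 < lam i := lt_of_le_of_ne (hlam_nonneg i) (Ne.symm h)
      simp [ha, h, inv_mul_cancel₀ hpos.ne']
  calc ∑ i, (Real.log (a i) + (a i)⁻¹ * lam i)
      = ∑ i, (if lam i = 0 then t else Real.log (lam i) + 1) := by
        exact Finset.sum_congr rfl (fun i _ => hterm i)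
    _ = (k : ℝ) * t + c := by
        rw [Finset.sum_ite, hc, hk, hZ]
        simp [Finset.sum_const, nsmul_eq_mul]
    _ ≤ t + c := by
        have : (k : ℝ) * t ≤ 1 * t := by
          apply mul_le_mul_of_nonpos_right _ (ht0.trans (by norm_num))
          exact_mod_cast hk1
        linarith
    _ < M := by linarith
end

section
/- Let Φ be a t×N real matrix of full row rank (N ≥ t), D an N×N diagonal matrix with positive diagonal, K a t×t symmetric positive definite matrix, and H a t×t symmetric positive semidefinite matrix with H ≠ 0. Define Ω(K) = D + Φᵀ K Φ. Then det Ω(K + H) > det Ω(K), i.e., K ↦ log det Ω(K) is strictly increasing in the Löwner order. -/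
open Matrix
open scoped MatrixOrder

/-- If `M` is positive semidefinite and nonzero, then `det (1 + M) > 1`. -/
lemma one_lt_det_one_add_aux {n : ℕ} {M : Matrix (Fin n) (Fin n) ℝ}
    (hM : M.PosSemidef) (hM0 : M ≠ 0) : 1 < (1 + M).det := by
  have hHerm := hM.isHermitian
  set U : Matrix (Fin n) (Fin n) ℝ := (hHerm.eigenvectorUnitary : Matrix (Fin n) (Fin n) ℝ)
    with hUdef
  have hU : U * star U = 1 :=
    Matrix.mem_unitaryGroup_iff.mp hHerm.eigenvectorUnitary.2
  have hspec := hHerm.spectral_theorem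
  set Dg : Matrix (Fin n) (Fin n) ℝ := diagonal (RCLike.ofReal ∘ hHerm.eigenvalues) with hDg
  have key : 1 + M = U * (1 + Dg) * star U := by
    rw [mul_add, add_mul, mul_one, hU]
    exact congrArg (1 + ·) (hspec.trans (Unitary.conjStarAlgAut_apply _ _))
  have hdet : (1 + M).det = (1 + Dg).det := by
    rw [key, det_mul_right_comm, hU, one_mul]
  have hdiag : (1 + Dg).det = ∏ i, (1 + hHerm.eigenvalues i) := by
    rw [hDg, ← Matrix.diagonal_one, Matrix.diagonal_add, Matrix.det_diagonal]
    simp [RCLike.ofReal_real_eq_id]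
  have hev0 : hHerm.eigenvalues ≠ 0 := by
    contrapose! hM0
    have := hHerm.spectral_theorem
    rwa [hM0, Pi.comp_zero, RCLike.ofReal_zero,
      (by rfl : Function.const (Fin n) (0 : ℝ) = fun _ ↦ 0),
      diagonal_zero, map_zero] at this
  obtain ⟨i, hi⟩ := Function.ne_iff.mp hev0
  have hpos : 0 < hHerm.eigenvalues i := lt_of_le_of_ne (hM.eigenvalues_nonneg i) (Ne.symm hi)
  rw [hdet, hdiag]
  calc (1 : ℝ) = ∏ _j : Fin n, (1 : ℝ) := by simp
    _ < ∏ j, (1 + hHerm.eigenvalues j) := by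
        refine Finset.prod_lt_prod (fun j _ => one_pos) (fun j _ => ?_)
          ⟨i, Finset.mem_univ i, by linarith⟩
        have := hM.eigenvalues_nonneg j
        linarith

/-- If `A` is positive definite and `B` is positive semidefinite and nonzero,
then `det A < det (A + B)`. -/
lemma det_lt_det_add_aux {n : ℕ} {A B : Matrix (Fin n) (Fin n) ℝ}
    (hA : A.PosDef) (hB : B.PosSemidef) (hB0 : B ≠ 0) : A.det < (A + B).det := by
  set S := CFC.sqrt A with hSdef
  have hS : S.PosSemidef := (CFC.sqrt_nonneg A).posSemidef
  have hSS : S * S = A := CFC.sqrt_mul_sqrt_self A hA.posSemidef.nonneg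
  have hdetS : 0 < S.det := by
    have h1 : S.det * S.det = A.det := by rw [← det_mul, hSS]
    have h2 : 0 < A.det := hA.det_pos
    have hnn : 0 ≤ S.det := by
      rw [hS.isHermitian.det_eq_prod_eigenvalues]
      apply Finset.prod_nonneg
      intro i _
      simpa [RCLike.ofReal_real_eq_id] using hS.eigenvalues_nonneg i
    rcases lt_or_eq_of_le hnn with h | h
    · exact h
    · exfalso; rw [← h, mul_zero] at h1; exact h2.ne' h1.symm
  have hu : IsUnit S.det := hdetS.ne'.isUnit
  have hSinvH : S⁻¹ᴴ = S⁻¹ := by rw [conjTranspose_nonsing_inv, hS.1]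
  set M := S⁻¹ * B * S⁻¹ with hMdef
  have hMpsd : M.PosSemidef := by
    have := hB.conjTranspose_mul_mul_same S⁻¹
    rwa [hSinvH] at this
  have hSMS : S * M * S = B := by
    rw [hMdef, ← mul_assoc, ← mul_assoc, mul_nonsing_inv S hu, one_mul, mul_assoc,
      nonsing_inv_mul S hu, mul_one]
  have hM0 : M ≠ 0 := by
    intro h
    rw [h, mul_zero, zero_mul] at hSMS
    exact hB0 hSMS.symm
  have hAB : A + B = S * (1 + M) * S := by
    rw [mul_add, add_mul, mul_one, hSS, hSMS]
  have hdet1 : 1 < (1 + M).det := one_lt_det_one_add_aux hMpsd hM0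
  rw [hAB, det_mul, det_mul, ← hSS, det_mul]
  calc S.det * S.det = S.det * 1 * S.det := by ring
    _ < S.det * (1 + M).det * S.det := by
        apply mul_lt_mul_of_pos_right _ hdetS
        exact mul_lt_mul_of_pos_left hdet1 hdetS

theorem det_Omega_strict_mono {t N : ℕ} (htN : t ≤ N)
    (Φ : Matrix (Fin t) (Fin N) ℝ) (hrank : Φ.rank = t)
    (d : Fin N → ℝ) (hd : ∀ i, 0 < d i)
    (D : Matrix (Fin N) (Fin N) ℝ) (hD : D = Matrix.diagonal d)
    (K : Matrix (Fin t) (Fin t) ℝ) (hK : K.PosDef)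
    (H : Matrix (Fin t) (Fin t) ℝ) (hH : H.PosSemidef) (hH0 : H ≠ 0) :
    (D + Φᵀ * K * Φ).det < (D + Φᵀ * (K + H) * Φ).det := by
  have hΦT : Φᵀ = Φᴴ := (conjTranspose_eq_transpose_of_trivial Φ).symm
  -- A := D + ΦᵀKΦ is positive definite
  have hDpd : D.PosDef := by rw [hD]; exact posDef_diagonal_iff.mpr hd
  have hKΦ : (Φᵀ * K * Φ).PosSemidef := by
    rw [hΦT]; exact hK.posSemidef.conjTranspose_mul_mul_same Φ
  have hApd : (D + Φᵀ * K * Φ).PosDef := hDpd.add_posSemidef hKΦ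
  -- B := ΦᵀHΦ is positive semidefinite
  have hBpsd : (Φᵀ * H * Φ).PosSemidef := by
    rw [hΦT]; exact hH.conjTranspose_mul_mul_same Φ
  -- Φ is surjective as a linear map
  have hsurj : Function.Surjective Φ.mulVecLin := by
    rw [← LinearMap.range_eq_top]
    apply Submodule.eq_top_of_finrank_eq
    rw [Module.finrank_pi]
    simpa [Matrix.rank] using hrank
  -- B ≠ 0
  have hB0 : Φᵀ * H * Φ ≠ 0 := by
    intro h0
    obtain ⟨C, hC⟩ := CStarAlgebra.nonneg_iff_eq_star_mul_self.mp hH.nonneg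
    have hCΦ : C * Φ = 0 := by
      have heq : (C * Φ)ᴴ * (C * Φ) = Φᵀ * H * Φ := by
        rw [hΦT, hC]
        simp only [conjTranspose_mul, Matrix.mul_assoc, star_eq_conjTranspose]
      exact conjTranspose_mul_self_eq_zero.mp (heq.trans h0)
    have hcomp : C.mulVecLin ∘ₗ Φ.mulVecLin = (0 : _) ∘ₗ Φ.mulVecLin := by
      rw [← Matrix.mulVecLin_mul, hCΦ, LinearMap.zero_comp]
      exact Matrix.mulVecLin_zero
    have hC0 : C.mulVecLin = 0 := (LinearMap.cancel_right hsurj).mp hcomp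
    have : C = 0 := by
      apply Matrix.ext
      intro i j
      have := congrFun (congrArg (fun f => f.toFun (Pi.single j 1)) hC0) i
      simpa [Matrix.mulVecLin, Matrix.mulVec_single] using this
    rw [this] at hC
    exact hH0 (by simp [hC])
  -- rewrite RHS
  have hsplit : D + Φᵀ * (K + H) * Φ = (D + Φᵀ * K * Φ) + Φᵀ * H * Φ := by
    rw [Matrix.mul_add, Matrix.add_mul, add_assoc]
  rw [hsplit]
  exact det_lt_det_add_aux hApd hBpsd hB0
end

section
/- Fix matrices Y (p×N), Φ (t×N of full row rank, N ≥ t), a diagonal positive N×N matrix D, a symmetric positive definite p×p matrix V, and a symmetric positive definite t×t matrix K. Define Ω = D + Φᵀ K Φ and the evidential loss L(M) = (p/2) log det Ω + (1/2) trace(Ω⁻¹ (Y − MΦ)ᵀ V⁻¹ (Y − MΦ)) as a function of the p×t matrix M. Then L has the unique global minimizer M̂ = Y D⁻¹ Φᵀ (Φ D⁻¹ Φᵀ)⁻¹, and this minimizer does not depend on K. -/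
open Matrix
open scoped MatrixOrder

lemma my_trace_nonneg {m n : Type*} [Fintype m] [Fintype n]
    (A : Matrix m n ℝ) : 0 ≤ (Aᵀ * A).trace := by
  rw [Matrix.trace]
  refine Finset.sum_nonneg fun j _ => ?_
  simp only [Matrix.diag_apply, Matrix.mul_apply, Matrix.transpose_apply]
  exact Finset.sum_nonneg fun i _ => mul_self_nonneg _

lemma my_trace_eq_zero {m n : Type*} [Fintype m] [Fintype n]
    (A : Matrix m n ℝ) (h : (Aᵀ * A).trace = 0) : A = 0 := by
  ext i j
  rw [Matrix.trace] at h
  have h1 : ∀ k ∈ Finset.univ, (0:ℝ) ≤ ((Aᵀ * A).diag) k := fun k _ => by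
    simp only [Matrix.diag_apply, Matrix.mul_apply, Matrix.transpose_apply]
    exact Finset.sum_nonneg fun i _ => mul_self_nonneg _
  have h2 := (Finset.sum_eq_zero_iff_of_nonneg h1).mp h j (Finset.mem_univ _)
  simp only [Matrix.diag_apply, Matrix.mul_apply, Matrix.transpose_apply] at h2
  have h3 := (Finset.sum_eq_zero_iff_of_nonneg (fun i _ => mul_self_nonneg (A i j))).mp h2
    i (Finset.mem_univ _)
  have := mul_self_eq_zero.mp h3
  simpa using this

lemma my_posDef_conj {n m : Type*} [Fintype n] [Fintype m] {A : Matrix n n ℝ}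
    (hA : A.PosDef) (B : Matrix n m ℝ) (hB : ∀ x, B *ᵥ x = 0 → x = 0) :
    (Bᵀ * A * B).PosDef := by
  rw [show Bᵀ = Bᴴ from (Matrix.conjTranspose_eq_transpose_of_trivial B).symm]
  refine Matrix.PosDef.of_dotProduct_mulVec_pos ?_ ?_
  · exact (hA.posSemidef.conjTranspose_mul_mul_same B).isHermitian
  · intro x hx
    have h1 : B *ᵥ x ≠ 0 := fun h => hx (hB x h)
    simpa only [star_mulVec, dotProduct_mulVec, vecMul_vecMul] using hA.dotProduct_mulVec_pos h1

lemma my_ker {t N : ℕ} (Φ : Matrix (Fin t) (Fin N) ℝ) (hrank : Φ.rank = t) :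
    ∀ x : Fin t → ℝ, Φᵀ *ᵥ x = 0 → x = 0 := by
  intro x hx
  have h1 : (Φᵀ).rank = t := by rw [Matrix.rank_transpose]; exact hrank
  rw [Matrix.rank] at h1
  have h3 := LinearMap.finrank_range_add_finrank_ker (Φᵀ).mulVecLin
  rw [h1] at h3
  simp only [Module.finrank_pi, Fintype.card_fin] at h3
  have h4 : Module.finrank ℝ (LinearMap.ker (Φᵀ).mulVecLin) = 0 := by omega
  have h5 : LinearMap.ker (Φᵀ).mulVecLin = ⊥ := Submodule.finrank_eq_zero.mp h4
  have h6 : x ∈ LinearMap.ker (Φᵀ).mulVecLin := by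
    rw [LinearMap.mem_ker, Matrix.mulVecLin_apply]; exact hx
  rw [h5] at h6
  simpa using h6

theorem evidential_loss_unique_min {p t N : ℕ} (htN : t ≤ N)
    (Y : Matrix (Fin p) (Fin N) ℝ)
    (Φ : Matrix (Fin t) (Fin N) ℝ) (hrank : Φ.rank = t)
    (d : Fin N → ℝ) (hd : ∀ i, 0 < d i)
    (D : Matrix (Fin N) (Fin N) ℝ) (hD : D = Matrix.diagonal d)
    (V : Matrix (Fin p) (Fin p) ℝ) (hV : V.PosDef)
    (K : Matrix (Fin t) (Fin t) ℝ) (hK : K.PosDef)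
    (Ω : Matrix (Fin N) (Fin N) ℝ) (hΩ : Ω = D + Φᵀ * K * Φ)
    (L : Matrix (Fin p) (Fin t) ℝ → ℝ)
    (hL : L = fun M => ((p : ℝ) / 2) * Real.log Ω.det
        + (1 / 2) * (Ω⁻¹ * (Y - M * Φ)ᵀ * V⁻¹ * (Y - M * Φ)).trace)
    (Mhat : Matrix (Fin p) (Fin t) ℝ)
    (hMhat : Mhat = Y * D⁻¹ * Φᵀ * (Φ * D⁻¹ * Φᵀ)⁻¹) :
    ∀ M : Matrix (Fin p) (Fin t) ℝ, L Mhat ≤ L M ∧ (L M = L Mhat → M = Mhat) := by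
  classical
  -- basic positive definiteness facts
  have hDpd : D.PosDef := by rw [hD]; exact Matrix.PosDef.diagonal hd
  have hDu : IsUnit D.det := isUnit_iff_ne_zero.mpr hDpd.det_pos.ne'
  have hDinv : D⁻¹.PosDef := hDpd.inv
  have hpsd : (Φᵀ * K * Φ).PosSemidef := by
    have := hK.posSemidef.conjTranspose_mul_mul_same Φ
    rwa [Matrix.conjTranspose_eq_transpose_of_trivial] at this
  have hΩpd : Ω.PosDef := by rw [hΩ]; exact hDpd.add_posSemidef hpsd
  have hΩu : IsUnit Ω.det := isUnit_iff_ne_zero.mpr hΩpd.det_pos.ne'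
  have hΩinvpd : Ω⁻¹.PosDef := hΩpd.inv
  have hVinvpd : V⁻¹.PosDef := hV.inv
  have hker := my_ker Φ hrank
  have hGpd : (Φ * D⁻¹ * Φᵀ).PosDef := by
    have := my_posDef_conj hDinv Φᵀ hker
    rwa [Matrix.transpose_transpose] at this
  set G := Φ * D⁻¹ * Φᵀ with hGdef
  have hGu : IsUnit G.det := isUnit_iff_ne_zero.mpr hGpd.det_pos.ne'
  have hKu : IsUnit K.det := isUnit_iff_ne_zero.mpr hK.det_pos.ne'
  set B := (1 : Matrix (Fin t) (Fin t) ℝ) + K * G with hBdef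
  have hBfac : B = K * (K⁻¹ + G) := by
    rw [hBdef, Matrix.mul_add, Matrix.mul_nonsing_inv _ hKu]
  have hBu : IsUnit B.det := by
    rw [hBfac, Matrix.det_mul]
    exact hKu.mul (isUnit_iff_ne_zero.mpr (hK.inv.add hGpd).det_pos.ne')
  -- the key identity Ω⁻¹ Φᵀ = D⁻¹ Φᵀ B⁻¹
  have hkey1 : Ω * (D⁻¹ * Φᵀ) = Φᵀ * B := by
    rw [hΩ, Matrix.add_mul, hBdef, Matrix.mul_add, Matrix.mul_one]
    congr 1
    · rw [← Matrix.mul_assoc, Matrix.mul_nonsing_inv _ hDu, Matrix.one_mul]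
    · rw [hGdef]; simp only [Matrix.mul_assoc]
  have hkey2 : Ω⁻¹ * Φᵀ = D⁻¹ * Φᵀ * B⁻¹ := by
    have h := congrArg (fun Z => Ω⁻¹ * Z) hkey1
    rw [Matrix.nonsing_inv_mul_cancel_left _ _ hΩu] at h
    have h2 := congrArg (fun Z => Z * B⁻¹) h
    rw [Matrix.mul_assoc Ω⁻¹, Matrix.mul_nonsing_inv_cancel_right _ _ hBu] at h2
    exact h2.symm
  -- the normal equation: the residual at Mhat is Ω⁻¹-orthogonal to Φᵀ
  have hE : (Y - Mhat * Φ) * (Ω⁻¹ * Φᵀ) = 0 := by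
    rw [Matrix.sub_mul, hkey2, hMhat]
    have h1 : Y * D⁻¹ * Φᵀ * G⁻¹ * Φ * (D⁻¹ * Φᵀ * B⁻¹) = Y * (D⁻¹ * Φᵀ * B⁻¹) := by
      simp only [Matrix.mul_assoc]
      rw [show Φ * (D⁻¹ * (Φᵀ * B⁻¹)) = G * B⁻¹ from by
        rw [hGdef]; simp only [Matrix.mul_assoc],
        Matrix.nonsing_inv_mul_cancel_left _ _ hGu]
    rw [h1, sub_self]
  have hsymΩ : (Ω⁻¹)ᵀ = Ω⁻¹ := by
    have := hΩinvpd.isHermitian.eq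
    rwa [Matrix.conjTranspose_eq_transpose_of_trivial] at this
  -- square roots of Ω⁻¹ and V⁻¹
  set S := CFC.sqrt Ω⁻¹ with hSdef
  have hS2 : S * S = Ω⁻¹ := CFC.sqrt_mul_sqrt_self _ hΩinvpd.posSemidef.nonneg
  have hSt : Sᵀ = S := by
    have := (Matrix.nonneg_iff_posSemidef.mp (CFC.sqrt_nonneg Ω⁻¹)).isHermitian.eq
    rwa [Matrix.conjTranspose_eq_transpose_of_trivial] at this
  have hSu : IsUnit S.det := by
    have hds : S.det * S.det = (Ω⁻¹).det := by rw [← Matrix.det_mul, hS2]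
    exact isUnit_iff_ne_zero.mpr fun h => hΩinvpd.det_pos.ne' (by rw [← hds, h, zero_mul])
  set W := CFC.sqrt V⁻¹ with hWdef
  have hW2 : W * W = V⁻¹ := CFC.sqrt_mul_sqrt_self _ hVinvpd.posSemidef.nonneg
  have hWt : Wᵀ = W := by
    have := (Matrix.nonneg_iff_posSemidef.mp (CFC.sqrt_nonneg V⁻¹)).isHermitian.eq
    rwa [Matrix.conjTranspose_eq_transpose_of_trivial] at this
  have hWu : IsUnit W.det := by
    have hds : W.det * W.det = (V⁻¹).det := by rw [← Matrix.det_mul, hW2]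
    exact isUnit_iff_ne_zero.mpr fun h => hVinvpd.det_pos.ne' (by rw [← hds, h, zero_mul])
  clear_value G B S W
  intro M
  simp only [hL]
  set Δ := M - Mhat with hΔ
  set C := Δ * Φ with hC
  set Rm := Y - Mhat * Φ with hR
  clear_value Δ C Rm
  have hsplit : Y - M * Φ = Rm - C := by
    rw [hC, hΔ, Matrix.sub_mul, hR]; abel
  -- cross terms vanish
  have hcross1 : (Ω⁻¹ * Rmᵀ * V⁻¹ * C).trace = 0 := by
    have hz : Φ * Ω⁻¹ * Rmᵀ = 0 := by
      have h : Φ * Ω⁻¹ * Rmᵀ = (Rm * (Ω⁻¹ * Φᵀ))ᵀ := by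
        rw [Matrix.transpose_mul, Matrix.transpose_mul, hsymΩ, Matrix.transpose_transpose,
          Matrix.mul_assoc]
      rw [h, hE, Matrix.transpose_zero]
    calc (Ω⁻¹ * Rmᵀ * V⁻¹ * C).trace
        = ((Ω⁻¹ * Rmᵀ * V⁻¹ * Δ) * Φ).trace := by
          rw [hC]; simp only [Matrix.mul_assoc]
      _ = (Φ * (Ω⁻¹ * Rmᵀ * V⁻¹ * Δ)).trace := Matrix.trace_mul_comm _ _
      _ = 0 := by
          simp only [← Matrix.mul_assoc]
          rw [hz]
          simp
  have hcross2 : (Ω⁻¹ * Cᵀ * V⁻¹ * Rm).trace = 0 := by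
    calc (Ω⁻¹ * Cᵀ * V⁻¹ * Rm).trace
        = (Ω⁻¹ * (Φᵀ * (Δᵀ * (V⁻¹ * Rm)))).trace := by
          rw [hC]; simp only [Matrix.transpose_mul, Matrix.mul_assoc]
      _ = ((Φᵀ * (Δᵀ * (V⁻¹ * Rm))) * Ω⁻¹).trace := Matrix.trace_mul_comm _ _
      _ = (Φᵀ * (Δᵀ * (V⁻¹ * (Rm * Ω⁻¹)))).trace := by simp only [Matrix.mul_assoc]
      _ = ((Δᵀ * (V⁻¹ * (Rm * Ω⁻¹))) * Φᵀ).trace := Matrix.trace_mul_comm _ _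
      _ = (Δᵀ * (V⁻¹ * (Rm * (Ω⁻¹ * Φᵀ)))).trace := by simp only [Matrix.mul_assoc]
      _ = 0 := by rw [hE]; simp
  -- quadratic decomposition of the trace
  have hdecomp : (Ω⁻¹ * (Y - M * Φ)ᵀ * V⁻¹ * (Y - M * Φ)).trace
      = (Ω⁻¹ * Rmᵀ * V⁻¹ * Rm).trace + (Ω⁻¹ * Cᵀ * V⁻¹ * C).trace := by
    rw [hsplit]
    have expand : Ω⁻¹ * (Rm - C)ᵀ * V⁻¹ * (Rm - C)
        = (Ω⁻¹ * Rmᵀ * V⁻¹ * Rm) - (Ω⁻¹ * Rmᵀ * V⁻¹ * C)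
          - (Ω⁻¹ * Cᵀ * V⁻¹ * Rm) + (Ω⁻¹ * Cᵀ * V⁻¹ * C) := by
      rw [Matrix.transpose_sub]
      simp only [Matrix.mul_sub, Matrix.sub_mul]
      abel
    rw [expand]
    simp only [Matrix.trace_add, Matrix.trace_sub, hcross1, hcross2]
    ring
  -- the quadratic term is a sum of squares
  have hqform : (Ω⁻¹ * Cᵀ * V⁻¹ * C).trace = ((W * C * S)ᵀ * (W * C * S)).trace := by
    calc (Ω⁻¹ * Cᵀ * V⁻¹ * C).trace
        = (Ω⁻¹ * (Cᵀ * V⁻¹ * C)).trace := by simp only [Matrix.mul_assoc]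
      _ = ((Cᵀ * V⁻¹ * C) * Ω⁻¹).trace := Matrix.trace_mul_comm _ _
      _ = (Cᵀ * (V⁻¹ * (C * (S * S)))).trace := by rw [← hS2]; simp only [Matrix.mul_assoc]
      _ = ((Cᵀ * (V⁻¹ * (C * S))) * S).trace := by simp only [Matrix.mul_assoc]
      _ = (S * (Cᵀ * (V⁻¹ * (C * S)))).trace := (Matrix.trace_mul_comm _ _).symm
      _ = ((W * C * S)ᵀ * (W * C * S)).trace := by
          rw [Matrix.transpose_mul, Matrix.transpose_mul, hSt, hWt, ← hW2]
          simp only [Matrix.mul_assoc]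
  have hq0 : 0 ≤ (Ω⁻¹ * Cᵀ * V⁻¹ * C).trace := by
    rw [hqform]; exact my_trace_nonneg _
  constructor
  · rw [hdecomp]
    linarith
  · intro hLM
    rw [hdecomp] at hLM
    have hq : (Ω⁻¹ * Cᵀ * V⁻¹ * C).trace = 0 := by linarith
    have hWCS : W * C * S = 0 := my_trace_eq_zero _ (by rw [← hqform]; exact hq)
    have hC0 : C = 0 := by
      have h := congrArg (fun Z => W⁻¹ * Z * S⁻¹) hWCS
      rwa [Matrix.mul_assoc W, Matrix.nonsing_inv_mul_cancel_left _ _ hWu,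
        Matrix.mul_nonsing_inv_cancel_right _ _ hSu, Matrix.mul_zero, Matrix.zero_mul] at h
    have hΔG : Δ * G = 0 := by
      calc Δ * G = C * (D⁻¹ * Φᵀ) := by rw [hC, hGdef]; simp only [Matrix.mul_assoc]
        _ = 0 := by rw [hC0, Matrix.zero_mul]
    have hΔ0 : Δ = 0 := by
      have h := congrArg (fun Z => Z * G⁻¹) hΔG
      rwa [Matrix.mul_nonsing_inv_cancel_right _ _ hGu, Matrix.zero_mul] at h
    have : M - Mhat = 0 := hΔ ▸ hΔ0
    exact sub_eq_zero.mp this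
end

section
/- (Bias of the evidence-maximizing scale estimator.) Let Y be a p×N random matrix following a matrix-T distribution with mean MΦ, row scale Ψ (p×p symmetric positive definite), column scale Ω = D + ΦᵀKΦ, and degrees of freedom ν − 2p, where the second-moment identity E[(Y − MΦ) Q (Y − MΦ)ᵀ] = (1/(ν−2p−2)) trace(Qᵀ Ω) Ψ holds for any N×N matrix Q (assuming ν − 2p > 2). Let P = I − D^{-1/2}Φᵀ(ΦD⁻¹Φᵀ)⁻¹ΦD^{-1/2} and ν' = ν − p − 1. Define Ψ̂ = (ν'/N) Y D^{-1/2} P D^{-1/2} Yᵀ. Then E[Ψ̂] = ((N−t)/N) · (ν'/(ν' − p − 1)) · Ψ. -/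
open Matrix MeasureTheory

theorem scale_estimator_bias {p t N : ℕ} (htN : t ≤ N)
    {Ωs : Type*} [MeasurableSpace Ωs] (μ : Measure Ωs) [IsProbabilityMeasure μ]
    (Φ : Matrix (Fin t) (Fin N) ℝ) (hrank : Φ.rank = t)
    (d : Fin N → ℝ) (hd : ∀ i, 0 < d i)
    (D : Matrix (Fin N) (Fin N) ℝ) (hD : D = Matrix.diagonal d)
    (K : Matrix (Fin t) (Fin t) ℝ) (hK : K.PosDef)
    (Ωm : Matrix (Fin N) (Fin N) ℝ) (hΩm : Ωm = D + Φᵀ * K * Φ)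
    (Ψ : Matrix (Fin p) (Fin p) ℝ) (hΨ : Ψ.PosDef)
    (M : Matrix (Fin p) (Fin t) ℝ)
    (ν : ℝ) (hν : 2 * (p : ℝ) + 2 < ν)
    (Y : Ωs → Matrix (Fin p) (Fin N) ℝ)
    -- second-moment identity of the matrix-T evidence Y ~ T(MΦ, Ψ, Ωm, ν - 2p)
    (hmoment : ∀ (Q : Matrix (Fin N) (Fin N) ℝ) (i j : Fin p),
      ∫ ω, ((Y ω - M * Φ) * Q * (Y ω - M * Φ)ᵀ) i j ∂μ
        = (1 / (ν - 2 * (p : ℝ) - 2)) * (Qᵀ * Ωm).trace * Ψ i j)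
    (Dhi : Matrix (Fin N) (Fin N) ℝ)
    (hDhi : Dhi = Matrix.diagonal fun i => (Real.sqrt (d i))⁻¹)
    (P : Matrix (Fin N) (Fin N) ℝ)
    (hP : P = 1 - Dhi * Φᵀ * (Φ * D⁻¹ * Φᵀ)⁻¹ * Φ * Dhi)
    (ν' : ℝ) (hν' : ν' = ν - (p : ℝ) - 1)
    (Ψhat : Ωs → Matrix (Fin p) (Fin p) ℝ)
    (hΨhat : ∀ ω, Ψhat ω = (ν' / (N : ℝ)) • (Y ω * Dhi * P * Dhi * (Y ω)ᵀ)) :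
    ∀ i j : Fin p,
      ∫ ω, Ψhat ω i j ∂μ
        = (((N : ℝ) - (t : ℝ)) / (N : ℝ)) * (ν' / (ν' - (p : ℝ) - 1)) * Ψ i j := by
  -- basic diagonal facts
  have hDinv : D⁻¹ = Matrix.diagonal (fun i => (d i)⁻¹) := by
    apply Matrix.inv_eq_right_inv
    rw [hD, Matrix.diagonal_mul_diagonal, ← Matrix.diagonal_one]
    have : (fun i => d i * (d i)⁻¹) = fun _ => (1 : ℝ) :=
      funext fun i => mul_inv_cancel₀ (hd i).ne'
    rw [this]
  have hDhi2 : Dhi * Dhi = D⁻¹ := by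
    rw [hDhi, hDinv, Matrix.diagonal_mul_diagonal]
    have : (fun i => (Real.sqrt (d i))⁻¹ * (Real.sqrt (d i))⁻¹) = fun i => (d i)⁻¹ :=
      funext fun i => by rw [← mul_inv, Real.mul_self_sqrt (hd i).le]
    rw [this]
  have hDhiD : Dhi * D * Dhi = 1 := by
    rw [hDhi, hD, Matrix.diagonal_mul_diagonal, Matrix.diagonal_mul_diagonal,
      ← Matrix.diagonal_one]
    have : (fun i => (Real.sqrt (d i))⁻¹ * d i * (Real.sqrt (d i))⁻¹) = fun _ => (1 : ℝ) :=
      funext fun i => by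
        rw [mul_comm ((Real.sqrt (d i))⁻¹) (d i), mul_assoc, ← mul_inv,
          Real.mul_self_sqrt (hd i).le, mul_inv_cancel₀ (hd i).ne']
    rw [this]
  -- A = Φ D⁻¹ Φᵀ is positive definite, hence invertible
  set A := Φ * D⁻¹ * Φᵀ with hA
  have hDinvPD : (D⁻¹).PosDef := by
    rw [hDinv]
    exact Matrix.PosDef.diagonal fun i => inv_pos.mpr (hd i)
  have hinj : Function.Injective (Φᵀ.mulVecLin) := by
    rw [← LinearMap.ker_eq_bot]
    have h1 := LinearMap.finrank_range_add_finrank_ker (Φᵀ.mulVecLin)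
    have h2 : Φᵀ.rank = t := by rw [Matrix.rank_transpose, hrank]
    rw [Matrix.rank] at h2
    rw [h2] at h1
    simp only [Module.finrank_pi, Fintype.card_fin] at h1
    have : Module.finrank ℝ (LinearMap.ker Φᵀ.mulVecLin) = 0 := by omega
    exact Submodule.finrank_eq_zero.mp this
  have hAPD : A.PosDef := by
    rw [Matrix.posDef_iff_dotProduct_mulVec]
    constructor
    · have := Matrix.isHermitian_mul_mul_conjTranspose Φ hDinvPD.isHermitian
      rwa [Matrix.conjTranspose_eq_transpose_of_trivial] at this
    · intro x hx
      have hy : Φᵀ *ᵥ x ≠ 0 := by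
        intro h
        exact hx (hinj (a₂ := 0)
          (by rw [Matrix.mulVecLin_apply, Matrix.mulVecLin_apply, Matrix.mulVec_zero, h]))
      have heq : star x ⬝ᵥ (A *ᵥ x) = star (Φᵀ *ᵥ x) ⬝ᵥ (D⁻¹ *ᵥ (Φᵀ *ᵥ x)) := by
        rw [hA, Matrix.mul_assoc, ← Matrix.mulVec_mulVec, Matrix.dotProduct_mulVec,
          ← Matrix.mulVec_transpose, Matrix.mulVec_mulVec]
        simp [star_trivial]
      rw [heq]
      exact hDinvPD.dotProduct_mulVec_pos hy
  have hAdet : IsUnit A.det := (Matrix.isUnit_iff_isUnit_det A).mp hAPD.isUnit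
  have hAinv : A⁻¹ * A = 1 := Matrix.nonsing_inv_mul A hAdet
  have hAinv' : A * A⁻¹ = 1 := Matrix.mul_nonsing_inv A hAdet
  have hAt : Aᵀ = A := by
    rw [← Matrix.conjTranspose_eq_transpose_of_trivial]
    exact hAPD.isHermitian
  have hDhit : Dhiᵀ = Dhi := by rw [hDhi, Matrix.diagonal_transpose]
  set Q := Dhi * P * Dhi with hQ
  -- Q annihilates Φᵀ
  have hQΦ : Q * Φᵀ = 0 := by
    have h1 : Dhi * (Dhi * Φᵀ) = D⁻¹ * Φᵀ := by rw [← Matrix.mul_assoc, hDhi2]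
    have h2 : Φ * (D⁻¹ * Φᵀ) = A := by rw [← Matrix.mul_assoc, hA]
    calc Q * Φᵀ = Dhi * (P * (Dhi * Φᵀ)) := by simp only [hQ, Matrix.mul_assoc]
      _ = Dhi * (Dhi * Φᵀ - Dhi * (Φᵀ * (A⁻¹ * (Φ * (Dhi * (Dhi * Φᵀ)))))) := by
            rw [hP]; simp only [Matrix.sub_mul, Matrix.one_mul, Matrix.mul_assoc]
      _ = Dhi * (Dhi * Φᵀ - Dhi * (Φᵀ * (A⁻¹ * A))) := by rw [h1, h2]
      _ = 0 := by rw [hAinv, Matrix.mul_one, sub_self, Matrix.mul_zero]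
  have hQt : Qᵀ = Q := by
    rw [hQ, hP]
    simp only [Matrix.transpose_mul, Matrix.transpose_sub, Matrix.transpose_one, hDhit,
      Matrix.transpose_transpose, Matrix.transpose_nonsing_inv, hAt]
    simp only [Matrix.sub_mul, Matrix.mul_sub, Matrix.one_mul, Matrix.mul_one, Matrix.mul_assoc]
  have hΦQ : Φ * Q = 0 := by
    have h := congrArg Matrix.transpose hQΦ
    rwa [Matrix.transpose_mul, Matrix.transpose_transpose, hQt, Matrix.transpose_zero] at h
  have e1 : Q * (Φᵀ * Mᵀ) = 0 := by rw [← Matrix.mul_assoc, hQΦ, Matrix.zero_mul]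
  have e2 : ∀ X : Matrix (Fin N) (Fin p) ℝ, Φ * (Q * X) = 0 := fun X => by
    rw [← Matrix.mul_assoc, hΦQ, Matrix.zero_mul]
  have e1' : Dhi * (P * (Dhi * (Φᵀ * Mᵀ))) = 0 := by
    have : Dhi * (P * (Dhi * (Φᵀ * Mᵀ))) = Q * (Φᵀ * Mᵀ) := by
      simp only [hQ, Matrix.mul_assoc]
    rw [this, e1]
  have e2' : ∀ X : Matrix (Fin N) (Fin p) ℝ, Φ * (Dhi * (P * (Dhi * X))) = 0 := by
    intro X
    have : Dhi * (P * (Dhi * X)) = Q * X := by simp only [hQ, Matrix.mul_assoc]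
    rw [this, e2]
  have key : ∀ ω, Y ω * Dhi * P * Dhi * (Y ω)ᵀ = (Y ω - M * Φ) * Q * (Y ω - M * Φ)ᵀ := by
    intro ω
    simp only [Matrix.transpose_sub, Matrix.transpose_mul, Matrix.sub_mul, Matrix.mul_sub, hQ,
      Matrix.mul_assoc, e1', e2', Matrix.mul_zero, Matrix.zero_mul, sub_zero, zero_sub, neg_neg, sub_neg_eq_add]
  -- the trace computation
  have htrP : P.trace = (N : ℝ) - (t : ℝ) := by
    rw [hP, Matrix.trace_sub, Matrix.trace_one]
    congr 1
    · simp
    · calc (Dhi * Φᵀ * A⁻¹ * Φ * Dhi).trace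
          = (Dhi * (Dhi * Φᵀ * A⁻¹ * Φ)).trace := Matrix.trace_mul_comm _ _
        _ = ((Dhi * Dhi) * (Φᵀ * (A⁻¹ * Φ))).trace := by simp only [Matrix.mul_assoc]
        _ = (D⁻¹ * Φᵀ * A⁻¹ * Φ).trace := by rw [hDhi2]; simp only [Matrix.mul_assoc]
        _ = (Φ * (D⁻¹ * Φᵀ * A⁻¹)).trace := Matrix.trace_mul_comm _ _
        _ = (A * A⁻¹).trace := by rw [hA]; simp only [Matrix.mul_assoc]
        _ = (t : ℝ) := by rw [hAinv', Matrix.trace_one]; simp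
  have htr : (Qᵀ * Ωm).trace = (N : ℝ) - (t : ℝ) := by
    rw [hQt, hΩm, Matrix.mul_add, Matrix.trace_add]
    have hz : Q * (Φᵀ * K * Φ) = 0 := by
      rw [Matrix.mul_assoc Φᵀ K Φ, ← Matrix.mul_assoc, hQΦ, Matrix.zero_mul]
    rw [hz, Matrix.trace_zero, add_zero]
    calc (Q * D).trace = (Dhi * (P * (Dhi * D))).trace := by
            simp only [hQ, Matrix.mul_assoc]
      _ = (P * (Dhi * D) * Dhi).trace := Matrix.trace_mul_comm _ _
      _ = (P * (Dhi * D * Dhi)).trace := by simp only [Matrix.mul_assoc]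
      _ = P.trace := by rw [hDhiD, Matrix.mul_one]
      _ = (N : ℝ) - (t : ℝ) := htrP
  -- conclude
  intro i j
  have step : ∀ ω, Ψhat ω i j
      = (ν' / (N : ℝ)) * (((Y ω - M * Φ) * Q * (Y ω - M * Φ)ᵀ) i j) := fun ω => by
    rw [hΨhat ω, ← key ω, Matrix.smul_apply, smul_eq_mul]
  simp only [step]
  rw [MeasureTheory.integral_const_mul, hmoment Q i j, htr]
  subst hν'
  ring
end
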